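/- arXiv:2008.02998 — 7 statements merged into one kernel-verified Lean document; each statement's English description precedes it below -/
import Mathlib

section
/- Let k be a commutative ring, q ≥ 1 an integer, Γ = Γ_q = ⟨σ, τ ∣ στσ⁻¹ = τ^q⟩, and kΓ its group algebra. Then the sequence of right kΓ-modules 0 → kΓ → kΓ ⊕ kΓ → kΓ → k → 0 is exact, where the first map sends x to ((1 − (∑_{j=0}^{q−1} τ^j)σ)·x, (τ − 1)·x), the second map sends (a, b) to (1 − τ)·a + (1 − σ)·b, and the last map is the augmentation sending every group element to 1. -/
def BSrels (q : ℕ) : Set (FreeGroup (Fin 2)) :=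
  {FreeGroup.of 0 * FreeGroup.of 1 * (FreeGroup.of 0)⁻¹ * (FreeGroup.of 1 ^ q)⁻¹}

namespace BSaux

variable (k : Type*) [CommRing k] (q : ℕ)

abbrev Gq (q : ℕ) := PresentedGroup (BSrels q)
abbrev Aq := MonoidAlgebra k (Gq q)

variable {q}

def sG : Gq q := PresentedGroup.of 0
def tG : Gq q := PresentedGroup.of 1

lemma rel_G : (sG : Gq q) * tG * sG⁻¹ * (tG ^ q)⁻¹ = 1 := by
  have h : (FreeGroup.of 0 * FreeGroup.of 1 * (FreeGroup.of 0)⁻¹ * (FreeGroup.of 1 ^ q)⁻¹ :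
      FreeGroup (Fin 2)) ∈ Subgroup.normalClosure (BSrels q) :=
    Subgroup.subset_normalClosure rfl
  have := (QuotientGroup.eq_one_iff (N := Subgroup.normalClosure (BSrels q)) _).2 h
  exact this

lemma rel_G' : (sG : Gq q) * tG = tG ^ q * sG := by
  have h1 : (sG : Gq q) * tG * sG⁻¹ = tG ^ q := mul_inv_eq_one.mp (rel_G (q := q))
  exact mul_inv_eq_iff_eq_mul.mp h1


variable {k}
noncomputable section

def ofG : Gq q → Aq k q := MonoidAlgebra.of k (Gq q)

lemma ofG_mul (g h : Gq q) : (ofG (g * h) : Aq k q) = ofG g * ofG h := map_mul _ _ _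
lemma ofG_one : (ofG (1 : Gq q) : Aq k q) = 1 := map_one (MonoidAlgebra.of k (Gq q))

def σA : Aq k q := ofG sG
def τA : Aq k q := ofG tG

lemma relA : (σA : Aq k q) * τA = τA ^ q * σA := by
  have := congrArg (ofG (k := k)) (rel_G' (q := q))
  simpa [σA, τA, ofG, map_mul, map_pow] using this

def Nq : Aq k q := ∑ j ∈ Finset.range q, τA ^ j

def d2' (x : Aq k q) : Aq k q × Aq k q := ((1 - Nq * σA) * x, (τA - 1) * x)
def d1' (p : Aq k q × Aq k q) : Aq k q := (1 - τA) * p.1 + (1 - σA) * p.2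

lemma geom : ((1 : Aq k q) - τA) * Nq = 1 - τA ^ q := by
  have h : ((τA : Aq k q) - 1) * Nq = τA ^ q - 1 := mul_geom_sum τA q
  have : -(((τA : Aq k q) - 1) * Nq) = -(τA ^ q - 1) := by rw [h]
  simpa [neg_sub, sub_mul, one_mul] using this

lemma d1d2 (x : Aq k q) : d1' (d2' x) = 0 := by
  have key : ((1 : Aq k q) - τA) * (1 - Nq * σA) + (1 - σA) * (τA - 1) = 0 := by
    have h1 : ((1 : Aq k q) - τA) * (1 - Nq * σA)
        = (1 - τA) - (1 - τA ^ q) * σA := by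
      rw [mul_sub, mul_one, ← mul_assoc, geom]
    have h2 : ((1:Aq k q) - τA ^ q) * σA = σA - σA * τA := by
      rw [sub_mul, one_mul, ← relA]
    rw [h1, h2]
    noncomm_ring
  calc d1' (d2' x) = (((1 : Aq k q) - τA) * (1 - Nq * σA) + (1 - σA) * (τA - 1)) * x := by
        simp only [d1', d2']; rw [add_mul, mul_assoc, mul_assoc]
    _ = 0 := by rw [key, zero_mul]

def zmul (z : Aq k q × Aq k q) (a : Aq k q) : Aq k q × Aq k q := (z.1 * a, z.2 * a)

lemma zmul_add (z z' : Aq k q × Aq k q) (a : Aq k q) :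
    zmul (z + z') a = zmul z a + zmul z' a := by simp [zmul, add_mul]
lemma zmul_mul (z : Aq k q × Aq k q) (a b : Aq k q) :
    zmul z (a * b) = zmul (zmul z a) b := by simp [zmul, mul_assoc]
lemma zmul_zero (a : Aq k q) : zmul (0 : Aq k q × Aq k q) a = 0 := by simp [zmul]
lemma zmul_one (z : Aq k q × Aq k q) : zmul z 1 = z := by simp [zmul]
lemma zmul_neg (z : Aq k q × Aq k q) (a : Aq k q) : zmul (-z) a = -(zmul z a) := by
  simp [zmul]
lemma zmul_smul (r : k) (z : Aq k q × Aq k q) (a : Aq k q) :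
    zmul (r • z) a = r • (zmul z a) := by
  simp [zmul, Prod.smul_def, smul_mul_assoc]

@[ext]
structure Cq (k : Type*) [CommRing k] (q : ℕ) where
  z : Aq k q × Aq k q
  g : Gq q

instance : Mul (Cq k q) := ⟨fun p r => ⟨zmul p.z (ofG r.g) + r.z, p.g * r.g⟩⟩
instance : One (Cq k q) := ⟨⟨0, 1⟩⟩
instance : Inv (Cq k q) := ⟨fun p => ⟨-zmul p.z (ofG p.g⁻¹), p.g⁻¹⟩⟩

@[simp] lemma mul_z (p r : Cq k q) : (p * r).z = zmul p.z (ofG r.g) + r.z := rfl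
@[simp] lemma mul_g (p r : Cq k q) : (p * r).g = p.g * r.g := rfl
@[simp] lemma one_z : (1 : Cq k q).z = 0 := rfl
@[simp] lemma one_g : (1 : Cq k q).g = 1 := rfl
@[simp] lemma inv_z (p : Cq k q) : (p⁻¹).z = -zmul p.z (ofG p.g⁻¹) := rfl
@[simp] lemma inv_g (p : Cq k q) : (p⁻¹).g = p.g⁻¹ := rfl

instance : Group (Cq k q) :=
  Group.ofLeftAxioms
    (fun a b c => by
      ext : 1
      · simp [zmul_add, ofG_mul, zmul_mul, add_assoc]
      · simp [mul_assoc])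
    (fun a => by
      ext : 1
      · simp [zmul_zero]
      · simp)
    (fun a => by
      ext : 1
      · simp [zmul_neg, ← zmul_mul, ← ofG_mul, zmul_one, ofG_one]
      · simp)

def genC : Fin 2 → Cq k q := ![⟨(0, 1), sG⟩, ⟨(1, 0), tG⟩]

def ℓq : FreeGroup (Fin 2) →* Cq k q := FreeGroup.lift (genC (k := k) (q := q))

def projC : Cq k q →* Gq q where
  toFun := Cq.g
  map_one' := rfl
  map_mul' _ _ := rfl

def cF (w : FreeGroup (Fin 2)) : Aq k q × Aq k q := (ℓq (k := k) (q := q) w).z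
def πF (w : FreeGroup (Fin 2)) : Gq q := (ℓq (k := k) (q := q) w).g

lemma πF_eq (w : FreeGroup (Fin 2)) :
    πF (k := k) (q := q) w = PresentedGroup.mk (BSrels q) w := by
  have : (projC (k := k) (q := q)).comp (ℓq (k := k) (q := q))
      = PresentedGroup.mk (BSrels q) := by
    apply FreeGroup.ext_hom
    intro i
    fin_cases i <;> · simp [ℓq, projC, genC]; rfl
  exact DFunLike.congr_fun this w

lemma cF_one : cF (k := k) (q := q) 1 = 0 := by
  simp [cF, map_one (ℓq (k := k) (q := q))]

lemma cF_mul (u v : FreeGroup (Fin 2)) :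
    cF (k := k) (q := q) (u * v) = zmul (cF u) (ofG (πF (k := k) (q := q) v)) + cF v := by
  simp [cF, πF, map_mul]

lemma cF_inv (u : FreeGroup (Fin 2)) :
    cF (k := k) (q := q) u⁻¹ = -zmul (cF u) (ofG (πF (k := k) (q := q) u)⁻¹) := by
  simp [cF, πF, map_inv]

lemma d1'_add (z z' : Aq k q × Aq k q) : d1' (z + z') = d1' z + d1' z' := by
  simp [d1', mul_add]; abel

lemma d1'_neg (z : Aq k q × Aq k q) : d1' (-z) = -d1' z := by
  simp [d1']; abel

lemma d1'_zmul (z : Aq k q × Aq k q) (a : Aq k q) : d1' (zmul z a) = d1' z * a := by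
  simp [d1', zmul, add_mul, mul_assoc]

lemma d1'_zero : d1' (0 : Aq k q × Aq k q) = 0 := by simp [d1']

lemma d1'_smul (r : k) (z : Aq k q × Aq k q) : d1' (r • z) = r • d1' z := by
  simp [d1', Prod.smul_def, mul_smul_comm, smul_add]

lemma d1'_cF (w : FreeGroup (Fin 2)) :
    d1' (cF (k := k) (q := q) w) = 1 - ofG (πF (k := k) (q := q) w) := by
  have main : ∀ p : Cq k q, p ∈ Subgroup.closure (Set.range (genC (k := k) (q := q))) →
      d1' p.z = 1 - ofG p.g := by
    intro p hp
    induction hp using Subgroup.closure_induction with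
    | mem x hx =>
      obtain ⟨i, rfl⟩ := hx
      fin_cases i
      · show d1' ((0 : Aq k q), (1 : Aq k q)) = 1 - ofG sG
        simp [d1', σA, genC]
      · show d1' ((1 : Aq k q), (0 : Aq k q)) = 1 - ofG tG
        simp [d1', τA, genC]
    | one => simp [d1'_zero, ofG_one]
    | mul x y hx hy ihx ihy =>
      rw [mul_z, mul_g, d1'_add, d1'_zmul, ihx, ihy, ofG_mul, sub_mul, one_mul]
      abel
    | inv x hx ih =>
      rw [inv_z, inv_g, d1'_neg, d1'_zmul, ih, sub_mul, one_mul, ← ofG_mul,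
        mul_inv_cancel, ofG_one]
      abel
  have hmem : ℓq (k := k) (q := q) w ∈ Subgroup.closure (Set.range (genC (k := k) (q := q))) := by
    have : ∀ u : FreeGroup (Fin 2),
        ℓq (k := k) (q := q) u ∈ Subgroup.closure (Set.range (genC (k := k) (q := q))) := by
      intro u
      induction u using FreeGroup.induction_on with
      | C1 => exact one_mem _
      | of i => exact Subgroup.subset_closure ⟨i, (FreeGroup.lift_apply_of (f := genC) (x := i)).symm⟩
      | inv_of i ih => rw [map_inv]; exact inv_mem ih
      | mul u v ihu ihv => rw [map_mul]; exact mul_mem ihu ihv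
    exact this w
  exact main _ hmem

def T : Submodule k (Aq k q × Aq k q) where
  carrier := Set.range (d2' (k := k) (q := q))
  add_mem' := by
    rintro _ _ ⟨x, rfl⟩ ⟨y, rfl⟩
    exact ⟨x + y, by simp [d2', mul_add, Prod.ext_iff]⟩
  zero_mem' := ⟨0, by simp [d2', Prod.ext_iff]⟩
  smul_mem' := by
    rintro r _ ⟨x, rfl⟩
    exact ⟨r • x, by simp [d2', mul_smul_comm, Prod.smul_def, Prod.ext_iff]⟩

lemma T_zmul {z : Aq k q × Aq k q} (hz : z ∈ T (k := k) (q := q)) (a : Aq k q) :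
    zmul z a ∈ T (k := k) (q := q) := by
  obtain ⟨x, rfl⟩ := hz
  exact ⟨x * a, by simp [d2', zmul, mul_assoc, Prod.ext_iff]⟩

lemma πF_mul (u v : FreeGroup (Fin 2)) :
    πF (k := k) (q := q) (u * v) = πF (k := k) (q := q) u * πF (k := k) (q := q) v := by simp [πF, map_mul]
lemma πF_inv (u : FreeGroup (Fin 2)) :
    πF (k := k) (q := q) u⁻¹ = (πF (k := k) (q := q) u)⁻¹ := by simp [πF, map_inv]
lemma πF_pow (u : FreeGroup (Fin 2)) (n : ℕ) :
    πF (k := k) (q := q) (u ^ n) = πF (k := k) (q := q) u ^ n := by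
  simp only [πF, map_pow]
  exact map_pow (projC (k := k) (q := q)) _ n
lemma πF_one : πF (k := k) (q := q) 1 = 1 := by simp [πF, map_one]

lemma cF_of0 : cF (k := k) (q := q) (FreeGroup.of 0) = (0, 1) := by
  simp [cF, ℓq, genC]
lemma cF_of1 : cF (k := k) (q := q) (FreeGroup.of 1) = (1, 0) := by
  simp [cF, ℓq, genC]
lemma πF_of0 : πF (k := k) (q := q) (FreeGroup.of 0) = sG := by
  simp [πF, ℓq, genC]
lemma πF_of1 : πF (k := k) (q := q) (FreeGroup.of 1) = tG := by
  simp [πF, ℓq, genC]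

lemma cF_pow1 (n : ℕ) :
    cF (k := k) (q := q) (FreeGroup.of 1 ^ n) = (∑ j ∈ Finset.range n, τA ^ j, 0) := by
  induction n with
  | zero => rw [pow_zero, cF_one, Finset.sum_range_zero]; rfl
  | succ n ih =>
    rw [pow_succ, cF_mul, ih, πF_of1, cF_of1]
    have hτ : (ofG tG : Aq k q) = τA := rfl
    have h2 : (∑ j ∈ Finset.range n, (τA : Aq k q) ^ j) * τA + 1
        = ∑ j ∈ Finset.range (n + 1), τA ^ j := by
      rw [Finset.sum_range_succ', Finset.sum_mul]
      simp [← pow_succ]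
    simp [zmul, Prod.ext_iff, hτ, h2]

lemma cF_relator :
    cF (k := k) (q := q)
      (FreeGroup.of 0 * FreeGroup.of 1 * (FreeGroup.of 0)⁻¹ * (FreeGroup.of 1 ^ q)⁻¹)
      ∈ T (k := k) (q := q) := by
  refine ⟨ofG (sG⁻¹ * (tG ^ q)⁻¹), ?_⟩
  rw [cF_mul, cF_mul, cF_mul, cF_inv, cF_inv, cF_pow1, cF_of0, cF_of1, πF_inv, πF_inv,
    πF_pow, πF_of0, πF_of1]
  have hσ : (σA : Aq k q) * ofG sG⁻¹ = 1 := by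
    rw [σA, ← ofG_mul, mul_inv_cancel, ofG_one]
  have hmain : (Nq : Aq k q) * σA * (ofG sG⁻¹ * ofG (tG ^ q)⁻¹) = Nq * ofG (tG ^ q)⁻¹ := by
    rw [mul_assoc Nq σA, ← mul_assoc σA, hσ, one_mul]
  simp only [d2', zmul, Prod.ext_iff, ofG_mul, Prod.fst, Prod.snd, Prod.mk_add_mk,
    Prod.neg_mk, zero_mul, one_mul, add_zero, zero_add, neg_neg, sub_mul]
  constructor
  · rw [hmain]
    simp [sub_eq_add_neg, Nq]
  · simp [sub_eq_add_neg, add_mul, mul_assoc, τA]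

def NN : Subgroup (FreeGroup (Fin 2)) where
  carrier := {w | πF (k := k) (q := q) w = 1 ∧ cF (k := k) (q := q) w ∈ T (k := k) (q := q)}
  one_mem' := ⟨πF_one, by rw [cF_one]; exact zero_mem _⟩
  mul_mem' := by
    rintro u v ⟨hu1, hu2⟩ ⟨hv1, hv2⟩
    refine ⟨by rw [πF_mul, hu1, hv1, one_mul], ?_⟩
    rw [cF_mul, hv1, ofG_one, zmul_one]
    exact add_mem hu2 hv2
  inv_mem' := by
    rintro u ⟨hu1, hu2⟩
    refine ⟨by rw [πF_inv, hu1, inv_one], ?_⟩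
    rw [cF_inv, hu1, inv_one, ofG_one, zmul_one]
    exact neg_mem hu2

instance NN_normal : (NN (k := k) (q := q)).Normal := by
  constructor
  rintro w ⟨hw1, hw2⟩ g
  constructor
  · rw [πF_mul, πF_mul, πF_inv, hw1, mul_one, mul_inv_cancel]
  · rw [cF_mul, cF_mul, cF_inv, πF_inv, hw1, ofG_one, zmul_one]
    have : zmul (cF (k := k) (q := q) g + cF w) (ofG (πF (k := k) (q := q) g)⁻¹) +
        -zmul (cF g) (ofG (πF (k := k) (q := q) g)⁻¹)
        = zmul (cF w) (ofG (πF (k := k) (q := q) g)⁻¹) := by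
      rw [zmul_add]; abel
    rw [this]
    exact T_zmul hw2 _

lemma key1 {w : FreeGroup (Fin 2)} (hw : πF (k := k) (q := q) w = 1) :
    cF (k := k) (q := q) w ∈ T (k := k) (q := q) := by
  have hmem : w ∈ Subgroup.normalClosure (BSrels q) := by
    rw [πF_eq] at hw
    exact (QuotientGroup.eq_one_iff w).1 hw
  have hsub : Subgroup.normalClosure (BSrels q) ≤ NN (k := k) (q := q) := by
    apply Subgroup.normalClosure_le_normal
    rintro r hr
    rw [BSrels, Set.mem_singleton_iff] at hr
    subst hr
    refine ⟨?_, cF_relator⟩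
    rw [πF_eq]
    exact (QuotientGroup.eq_one_iff _).2 (Subgroup.subset_normalClosure rfl)
  exact (hsub hmem).2

lemma cF_congr {u v : FreeGroup (Fin 2)}
    (h : πF (k := k) (q := q) u = πF (k := k) (q := q) v) :
    cF (k := k) (q := q) u - cF (k := k) (q := q) v ∈ T (k := k) (q := q) := by
  have h1 : πF (k := k) (q := q) (v⁻¹ * u) = 1 := by
    rw [πF_mul, πF_inv, h, inv_mul_cancel]
  have h2 : cF (k := k) (q := q) u = cF (k := k) (q := q) v + cF (k := k) (q := q) (v⁻¹ * u) := by
    have : v * (v⁻¹ * u) = u := by group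
    conv_lhs => rw [← this]
    rw [cF_mul, h1, ofG_one, zmul_one]
  rw [h2, add_sub_cancel_left]
  exact key1 h1

def sec (g : Gq q) : FreeGroup (Fin 2) :=
  Function.surjInv (PresentedGroup.mk_surjective (BSrels q)) g

lemma πF_sec (g : Gq q) : πF (k := k) (q := q) (sec g) = g := by
  rw [πF_eq]
  exact Function.surjInv_eq _ g

def hmap : Aq k q →ₗ[k] Aq k q × Aq k q :=
  (Finsupp.linearCombination k (fun g : Gq q => -cF (k := k) (q := q) (sec g))).comp
    (MonoidAlgebra.coeffLinearEquiv k).toLinearMap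

lemma hmap_of (g : Gq q) : hmap (k := k) (q := q) (ofG g) = -cF (k := k) (q := q) (sec g) := by
  have : (ofG g : Aq k q) = MonoidAlgebra.single g 1 := rfl
  rw [this, hmap]
  change Finsupp.linearCombination k (fun g : Gq q => -cF (k := k) (q := q) (sec g)) (Finsupp.single g 1) = _
  erw [Finsupp.linearCombination_single]
  rw [one_smul]

lemma key2a (a : Aq k q) :
    ((a, 0) : Aq k q × Aq k q) - hmap ((1 - τA) * a) ∈ T (k := k) (q := q) := by
  induction a using MonoidAlgebra.induction_on with
  | of g =>
    have hexp : ((1 : Aq k q) - τA) * MonoidAlgebra.of k (Gq q) g = ofG g - ofG (tG * g) := by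
      rw [sub_mul, one_mul, ofG_mul]; rfl
    rw [hexp, map_sub, hmap_of, hmap_of]
    have h2 : cF (k := k) (q := q) (FreeGroup.of 1 * sec g) = (ofG g, 0) + cF (sec g) := by
      rw [cF_mul, cF_of1, πF_sec]
      simp [zmul, Prod.ext_iff]
    have h3 : ((ofG g, 0) : Aq k q × Aq k q) - (-cF (sec g) - -cF (sec (tG * g)))
        = cF (k := k) (q := q) (FreeGroup.of 1 * sec g) - cF (sec (tG * g)) := by
      rw [h2]; abel
    have hgoal : ((MonoidAlgebra.of k (Gq q) g, 0) : Aq k q × Aq k q)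
        - (-cF (sec g) - -cF (sec (tG * g)))
        = cF (k := k) (q := q) (FreeGroup.of 1 * sec g) - cF (sec (tG * g)) := h3
    rw [hgoal]
    exact cF_congr (by rw [πF_mul, πF_of1, πF_sec, πF_sec])
  | add f f' hf hf' =>
    rw [mul_add, map_add]
    have h4 : ((f + f', (0 : Aq k q)) : Aq k q × Aq k q)
        - (hmap ((1 - τA) * f) + hmap ((1 - τA) * f'))
        = (((f, 0) : Aq k q × Aq k q) - hmap ((1 - τA) * f))
          + (((f', 0) : Aq k q × Aq k q) - hmap ((1 - τA) * f')) := by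
      have h5 : ((f + f', (0 : Aq k q)) : Aq k q × Aq k q) = (f, 0) + (f', 0) := by
        rw [Prod.mk_add_mk, add_zero]
      rw [h5]; abel
    rw [h4]
    exact add_mem hf hf'
  | smul r f hf =>
    rw [mul_smul_comm, map_smul]
    have h4 : ((r • f, (0 : Aq k q)) : Aq k q × Aq k q) - r • hmap ((1 - τA) * f)
        = r • (((f, 0) : Aq k q × Aq k q) - hmap ((1 - τA) * f)) := by
      simp [smul_sub]
    rw [h4]
    exact Submodule.smul_mem _ r hf

lemma key2b (b : Aq k q) :
    ((0, b) : Aq k q × Aq k q) - hmap ((1 - σA) * b) ∈ T (k := k) (q := q) := by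
  induction b using MonoidAlgebra.induction_on with
  | of g =>
    have hexp : ((1 : Aq k q) - σA) * MonoidAlgebra.of k (Gq q) g = ofG g - ofG (sG * g) := by
      rw [sub_mul, one_mul, ofG_mul]; rfl
    rw [hexp, map_sub, hmap_of, hmap_of]
    have h2 : cF (k := k) (q := q) (FreeGroup.of 0 * sec g) = (0, ofG g) + cF (sec g) := by
      rw [cF_mul, cF_of0, πF_sec]
      simp [zmul, Prod.ext_iff]
    have h3 : (((0 : Aq k q), ofG g) : Aq k q × Aq k q) - (-cF (sec g) - -cF (sec (sG * g)))
        = cF (k := k) (q := q) (FreeGroup.of 0 * sec g) - cF (sec (sG * g)) := by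
      rw [h2]; abel
    rw [show ((0, MonoidAlgebra.of k (Gq q) g) : Aq k q × Aq k q) = ((0 : Aq k q), ofG g) from rfl,
      h3]
    exact cF_congr (by rw [πF_mul, πF_of0, πF_sec, πF_sec])
  | add f f' hf hf' =>
    rw [mul_add, map_add]
    have h4 : (((0 : Aq k q), f + f') : Aq k q × Aq k q)
        - (hmap ((1 - σA) * f) + hmap ((1 - σA) * f'))
        = ((((0 : Aq k q), f) : Aq k q × Aq k q) - hmap ((1 - σA) * f))
          + ((((0 : Aq k q), f') : Aq k q × Aq k q) - hmap ((1 - σA) * f')) := by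
      have h5 : (((0 : Aq k q), f + f') : Aq k q × Aq k q) = (0, f) + (0, f') := by
        rw [Prod.mk_add_mk, add_zero]
      rw [h5]; abel
    rw [h4]
    exact add_mem hf hf'
  | smul r f hf =>
    rw [mul_smul_comm, map_smul]
    have h4 : (((0 : Aq k q), r • f) : Aq k q × Aq k q) - r • hmap ((1 - σA) * f)
        = r • ((((0 : Aq k q), f) : Aq k q × Aq k q) - hmap ((1 - σA) * f)) := by
      simp [smul_sub]
    rw [h4]
    exact Submodule.smul_mem _ r hf

lemma key2 {z : Aq k q × Aq k q} (hz : d1' z = 0) : z ∈ T (k := k) (q := q) := by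
  obtain ⟨a, b⟩ := z
  have hz' : (1 - τA) * a + (1 - σA) * b = 0 := hz
  have hsum := add_mem (key2a (k := k) (q := q) a) (key2b (k := k) (q := q) b)
  have heq : ((a, b) : Aq k q × Aq k q)
      = (((a, 0) : Aq k q × Aq k q) - hmap ((1 - τA) * a))
        + (((0, b) : Aq k q × Aq k q) - hmap ((1 - σA) * b)) := by
    have : hmap (k := k) (q := q) ((1 - τA) * a) + hmap ((1 - σA) * b) = 0 := by
      rw [← map_add, hz', map_zero]
    have h4 : (((a, 0) : Aq k q × Aq k q) - hmap ((1 - τA) * a))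
        + (((0, b) : Aq k q × Aq k q) - hmap ((1 - σA) * b))
        = ((a, 0) + ((0, b) : Aq k q × Aq k q))
          - (hmap ((1 - τA) * a) + hmap ((1 - σA) * b)) := by abel
    rw [h4, this, sub_zero, Prod.mk_add_mk, add_zero, zero_add]
  rw [heq]
  exact hsum

def augA : Aq k q →ₐ[k] k := MonoidAlgebra.lift k k (Gq q) 1

lemma aug_ofG (g : Gq q) : augA (k := k) (q := q) (ofG g) = 1 := by
  simp [augA, ofG]

def U : Submodule k (Aq k q) where
  carrier := Set.range (d1' (k := k) (q := q))
  add_mem' := by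
    rintro _ _ ⟨p, rfl⟩ ⟨p', rfl⟩
    exact ⟨p + p', (d1'_add p p').symm ▸ rfl⟩
  zero_mem' := ⟨0, d1'_zero⟩
  smul_mem' := by
    rintro r _ ⟨p, rfl⟩
    exact ⟨r • p, d1'_smul r p⟩

lemma U_mul {x : Aq k q} (hx : x ∈ U (k := k) (q := q)) (y : Aq k q) :
    x * y ∈ U (k := k) (q := q) := by
  obtain ⟨p, rfl⟩ := hx
  exact ⟨zmul p y, d1'_zmul p y⟩

lemma ofG_sub_one_mem (g : Gq q) : (ofG g : Aq k q) - 1 ∈ U (k := k) (q := q) := by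
  let H : Subgroup (Gq q) :=
    { carrier := {g | (ofG g : Aq k q) - 1 ∈ U (k := k) (q := q)}
      one_mem' := by simp [ofG_one]
      mul_mem' := by
        rintro a b ha hb
        have : (ofG (a * b) : Aq k q) - 1 = ((ofG a : Aq k q) - 1) * ofG b + (ofG b - 1) := by
          rw [ofG_mul, sub_mul, one_mul]; abel
        rw [Set.mem_setOf_eq, this]
        exact add_mem (U_mul ha _) hb
      inv_mem' := by
        rintro a ha
        have : (ofG a⁻¹ : Aq k q) - 1 = -(((ofG a : Aq k q) - 1) * ofG a⁻¹) := by
          rw [sub_mul, one_mul, ← ofG_mul, mul_inv_cancel, ofG_one]; abel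
        rw [Set.mem_setOf_eq, this]
        exact neg_mem (U_mul ha _) }
  have : ∀ g : Gq q, g ∈ H := by
    intro g
    apply PresentedGroup.generated_by
    intro j
    fin_cases j
    · show (ofG sG : Aq k q) - 1 ∈ U (k := k) (q := q)
      refine ⟨(0, -1), ?_⟩
      simp [d1', σA]
    · show (ofG tG : Aq k q) - 1 ∈ U (k := k) (q := q)
      refine ⟨(-1, 0), ?_⟩
      simp [d1', τA]
  exact this g

lemma mem_U_of_aug_zero {x : Aq k q} (hx : augA (k := k) (q := q) x = 0) :
    x ∈ U (k := k) (q := q) := by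
  have e2 : ∑ g ∈ x.coeff.support, (x.coeff g) • (ofG g : Aq k q) = x := by
    simp only [ofG, MonoidAlgebra.of_apply, MonoidAlgebra.smul_single', mul_one]
    exact MonoidAlgebra.sum_coeff_single x
  have e3 : ∑ g ∈ x.coeff.support, x.coeff g = 0 := by
    rw [← hx]
    simp [augA, MonoidAlgebra.lift_apply, Finsupp.sum]
  have e1 : x = ∑ g ∈ x.coeff.support, (x.coeff g) • ((ofG g : Aq k q) - 1) := by
    have : ∑ g ∈ x.coeff.support, (x.coeff g) • ((ofG g : Aq k q) - 1)
        = (∑ g ∈ x.coeff.support, (x.coeff g) • (ofG g : Aq k q))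
          - (∑ g ∈ x.coeff.support, x.coeff g) • (1 : Aq k q) := by
      rw [Finset.sum_smul, ← Finset.sum_sub_distrib]
      simp [smul_sub]
    rw [this, e2, e3, zero_smul, sub_zero]
  rw [e1]
  exact Submodule.sum_mem _ fun g _ => Submodule.smul_mem _ _ (ofG_sub_one_mem g)

section inj

lemma addLeft_pow (n : ℕ) (x : ℚ) : ((Equiv.addLeft (1 : ℚ)) ^ n) x = n + x := by
  induction n generalizing x with
  | zero => simp
  | succ n ih =>
    rw [pow_succ, Equiv.Perm.mul_apply]
    simp only [Equiv.coe_addLeft]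
    rw [ih]
    push_cast; ring

def fgen (hq : 1 ≤ q) : Fin 2 → Equiv.Perm ℚ :=
  ![Equiv.mulLeft₀ (q : ℚ) (Nat.cast_ne_zero.mpr (by omega)), Equiv.addLeft (1 : ℚ)]

lemma φq_aux (hq : 1 ≤ q) : ∀ r ∈ BSrels q, FreeGroup.lift (fgen hq) r = 1 := by
  rintro r hr
  rw [BSrels, Set.mem_singleton_iff] at hr
  subst hr
  simp only [fgen, map_mul, map_inv, map_pow, FreeGroup.lift_apply_of, Matrix.cons_val_zero,
    Matrix.cons_val_one, Matrix.head_cons]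
  rw [mul_inv_eq_one]
  ext x
  simp only [Equiv.Perm.mul_apply, addLeft_pow, Equiv.Perm.inv_def,
    Equiv.mulLeft₀_symm_apply, Equiv.mulLeft₀_apply, Equiv.coe_addLeft]
  field_simp

def φq (hq : 1 ≤ q) : Gq q →* Equiv.Perm ℚ := PresentedGroup.toGroup (φq_aux hq)

lemma φq_t (hq : 1 ≤ q) : φq hq (tG (q := q)) = Equiv.addLeft (1 : ℚ) := by
  show PresentedGroup.toGroup (φq_aux hq) (PresentedGroup.of 1) = _
  rw [PresentedGroup.toGroup.of]
  simp [fgen]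

lemma t_pow_inj (hq : 1 ≤ q) {n m : ℕ} (h : tG (q := q) ^ n = tG ^ m) : n = m := by
  have h2 := congrArg (φq (q := q) hq) h
  rw [map_pow, map_pow, φq_t hq] at h2
  have h3 := congrArg (fun (e : Equiv.Perm ℚ) => e 0) h2
  simp only [addLeft_pow] at h3
  exact_mod_cast h3

lemma tau_regular (hq : 1 ≤ q) {x : Aq k q} (hx : τA * x = x) : x = 0 := by
  by_contra h
  obtain ⟨g0, hg0⟩ := Finsupp.support_nonempty_iff.mpr (mt MonoidAlgebra.coeff_eq_zero.mp h)
  have hshift : ∀ y : Gq q, x.coeff (tG * y) = x.coeff y := by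
    intro y
    have h1 : (τA * x : Aq k q).coeff (tG * y) = x.coeff (tG * y) := by rw [hx]
    have h2 : (τA * x : Aq k q).coeff (tG * y) = x.coeff y := by
      rw [show (τA : Aq k q) = MonoidAlgebra.single tG 1 from rfl,
        MonoidAlgebra.coeff_single_mul_apply]
      simp
    rw [← h1, h2]
  have hmem : ∀ n : ℕ, tG ^ n * g0 ∈ x.coeff.support := by
    intro n
    induction n with
    | zero => simpa using hg0
    | succ n ih =>
      rw [Finsupp.mem_support_iff] at ih ⊢
      rw [pow_succ', mul_assoc, hshift]
      exact ih
  have hinj : Function.Injective (fun n : ℕ => tG (q := q) ^ n * g0) := by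
    intro n m hnm
    exact t_pow_inj hq (mul_right_cancel hnm)
  exact (x.coeff.support.finite_toSet).not_infinite
    (Set.infinite_of_injective_forall_mem hinj fun n => by
      simpa using hmem n)

lemma d2'_inj (hq : 1 ≤ q) : Function.Injective (d2' (k := k) (q := q)) := by
  intro x y hxy
  have h2 : (τA - 1) * x = (τA - 1) * y := congrArg Prod.snd hxy
  have h3 : τA * (x - y) = x - y := by
    have : (τA - 1) * (x - y) = 0 := by rw [mul_sub, h2, sub_self]
    rw [sub_mul, one_mul, sub_eq_zero] at this
    exact this
  have := tau_regular hq h3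
  exact sub_eq_zero.mp this

end inj

end
end BSaux


/-- The sequence of right `kΓ_q`-modules `0 → kΓ → kΓ ⊕ kΓ → kΓ → k → 0` is exact, where the
first map is `x ↦ ((1 − (∑_{j<q} τ^j)σ)·x, (τ − 1)·x)`, the second is
`(a, b) ↦ (1 − τ)·a + (1 − σ)·b`, and the last is the augmentation sending every group
element to `1`.  Exactness is expressed as: the first map is injective, the range of each map
is the kernel of the next, and the augmentation is surjective. -/
theorem stmt3 (k : Type*) [CommRing k] (q : ℕ) (hq : 1 ≤ q) :
    let G := PresentedGroup (BSrels q)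
    let A := MonoidAlgebra k G
    let σ : A := MonoidAlgebra.of k G (PresentedGroup.of 0)
    let τ : A := MonoidAlgebra.of k G (PresentedGroup.of 1)
    let aug : A →ₐ[k] k := MonoidAlgebra.lift k k G 1
    let d2 : A → A × A := fun x => ((1 - (∑ j ∈ Finset.range q, τ ^ j) * σ) * x, (τ - 1) * x)
    let d1 : A × A → A := fun p => (1 - τ) * p.1 + (1 - σ) * p.2
    Function.Injective d2 ∧
      Set.range d2 = {p : A × A | d1 p = 0} ∧
      Set.range d1 = {x : A | aug x = 0} ∧
      Function.Surjective (aug : A → k) := by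
  intro G A σ τ aug d2 d1
  refine ⟨?_, ?_, ?_, ?_⟩
  · exact BSaux.d2'_inj (k := k) (q := q) hq
  · ext z
    constructor
    · rintro ⟨x, rfl⟩
      exact BSaux.d1d2 (k := k) (q := q) x
    · intro hz
      exact BSaux.key2 (k := k) (q := q) hz
  · ext x
    constructor
    · rintro ⟨p, rfl⟩
      have h1 : aug τ = 1 := BSaux.aug_ofG (k := k) (q := q) _
      have h2 : aug σ = 1 := BSaux.aug_ofG (k := k) (q := q) _
      show aug ((1 - τ) * p.1 + (1 - σ) * p.2) = 0
      rw [map_add, map_mul, map_mul, map_sub, map_sub, map_one, h1, h2]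
      simp
    · intro hx
      exact BSaux.mem_U_of_aug_zero (k := k) (q := q) hx
  · intro c0
    exact ⟨algebraMap k A c0, (aug.commutes c0).trans (Algebra.algebraMap_self_apply c0)⟩
end

section
/- Let K be a field, n ≥ 1, and c ∈ K such that c^i ≠ 1 for all 1 ≤ i ≤ n. If A is an n×n matrix over K whose characteristic polynomial equals the characteristic polynomial of c·A, then the characteristic polynomial of A is t^n; in particular A^n = 0. -/
open Polynomial

lemma coeff_comp_C_mul_X {K : Type*} [CommRing K] (p : K[X]) (c : K) (k : ℕ) :
    (p.comp (C c * X)).coeff k = c ^ k * p.coeff k := by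
  induction p using Polynomial.induction_on' with
  | add p q hp hq => simp [add_comp, hp, hq, mul_add]
  | monomial i a =>
      rw [monomial_comp, mul_pow, ← C_pow, ← mul_assoc, ← C_mul]
      rw [C_mul_X_pow_eq_monomial, coeff_monomial, coeff_monomial]
      rcases eq_or_ne i k with rfl | hne
      · simp [mul_comm]
      · simp [hne]

lemma charmatrix_smul_map {K : Type*} [Field K] {n : ℕ} (A : Matrix (Fin n) (Fin n) K) (c : K) :
    (Matrix.charmatrix (c • A)).map (aeval (C c * X) : K[X] →ₐ[K] K[X]).toRingHom
      = c • Matrix.charmatrix A := by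
  ext i j
  rw [Matrix.map_apply, Matrix.smul_apply]
  rcases eq_or_ne i j with rfl | hne
  · rw [Matrix.charmatrix_apply_eq, Matrix.charmatrix_apply_eq, Matrix.smul_apply,
      smul_eq_mul, AlgHom.toRingHom_eq_coe, RingHom.coe_coe, map_sub, aeval_X, aeval_C, Polynomial.algebraMap_eq,
      smul_sub, smul_eq_C_mul, smul_eq_C_mul, ← C_mul]
  · rw [Matrix.charmatrix_apply_ne _ _ _ hne, Matrix.charmatrix_apply_ne _ _ _ hne,
      Matrix.smul_apply, smul_eq_mul, AlgHom.toRingHom_eq_coe, RingHom.coe_coe,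
      map_neg, aeval_C, Polynomial.algebraMap_eq, smul_neg, smul_eq_C_mul, ← C_mul]

lemma charpoly_smul_comp {K : Type*} [Field K] {n : ℕ} (A : Matrix (Fin n) (Fin n) K) (c : K) :
    ((c • A).charpoly).comp (C c * X) = C (c ^ n) * A.charpoly := by
  have := congrArg Matrix.det (charmatrix_smul_map A c)
  rw [← RingHom.mapMatrix_apply, ← RingHom.map_det, ← algebraMap_smul K[X] c A.charmatrix, Matrix.det_smul] at this
  simpa [Matrix.charpoly, aeval_def, eval₂_eq_eval_map, smul_eq_C_mul, comp]
    using this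

lemma charpoly_zero_matrix {K : Type*} [Field K] (n : ℕ) :
    (0 : Matrix (Fin n) (Fin n) K).charpoly = X ^ n := by
  have : Matrix.charmatrix (0 : Matrix (Fin n) (Fin n) K)
      = (X : K[X]) • (1 : Matrix (Fin n) (Fin n) K[X]) := by
    ext i j
    rcases eq_or_ne i j with rfl | hne
    · simp [Matrix.charmatrix_apply_eq]
    · simp [Matrix.charmatrix_apply_ne _ _ _ hne, Matrix.one_apply_ne hne]
  rw [Matrix.charpoly, this, Matrix.det_smul]
  simp

/-- Let `K` be a field, `n ≥ 1`, and `c ∈ K` with `c^i ≠ 1` for all `1 ≤ i ≤ n`.  If `A` is an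
`n×n` matrix over `K` whose characteristic polynomial equals that of `c·A`, then the
characteristic polynomial of `A` is `t^n`; in particular `A^n = 0`. -/
theorem stmt4 {K : Type*} [Field K] (n : ℕ) (hn : 1 ≤ n) (c : K)
    (hc : ∀ i : ℕ, 1 ≤ i → i ≤ n → c ^ i ≠ 1)
    (A : Matrix (Fin n) (Fin n) K)
    (h : A.charpoly = (c • A).charpoly) :
    A.charpoly = Polynomial.X ^ n ∧ A ^ n = 0 := by
  have hcp : A.charpoly = Polynomial.X ^ n := by
    rcases eq_or_ne c 0 with rfl | hc0
    · rw [h, zero_smul, charpoly_zero_matrix]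
    · have key : ∀ k, k < n → A.charpoly.coeff k = 0 := by
        intro k hk
        have h1 := congrArg (fun p => Polynomial.coeff p k) (charpoly_smul_comp A c)
        simp only [coeff_comp_C_mul_X, coeff_C_mul] at h1
        rw [← h] at h1
        by_contra hne
        have hck : c ^ k = c ^ n := mul_right_cancel₀ hne h1
        have : c ^ k * c ^ (n - k) = c ^ k * 1 := by
          rw [mul_one, ← pow_add, Nat.add_sub_cancel' hk.le, hck]
        exact hc (n - k) (by omega) (by omega)
          (mul_left_cancel₀ (pow_ne_zero k hc0) this)
      have hmonic := A.charpoly_monic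
      have hdeg : A.charpoly.natDegree = n := by
        simpa using A.charpoly_natDegree_eq_dim
      ext k
      rcases lt_trichotomy k n with hk | rfl | hk
      · rw [key k hk, coeff_X_pow]
        simp [Nat.ne_of_lt hk]
      · have h1 := hmonic.coeff_natDegree
        rw [hdeg] at h1
        rw [coeff_X_pow, if_pos rfl]
        exact h1
      · rw [coeff_X_pow, if_neg (Nat.ne_of_gt hk),
          Polynomial.coeff_eq_zero_of_natDegree_lt (by omega)]
  refine ⟨hcp, ?_⟩
  have := A.aeval_self_charpoly
  rwa [hcp, map_pow, aeval_X] at this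
end

section
/- Let A be a commutative ring and I ⊆ A an ideal with I^k = 0 for some k ≥ 1. Then the kernel of the reduction homomorphism GL_n(A) → GL_n(A/I), i.e. the group of invertible n×n matrices congruent to the identity modulo I, is a nilpotent group of nilpotency class at most k − 1. -/
open scoped commutatorElement

section Aux

variable {A : Type*} [CommRing A] {n : ℕ}

lemma entMul {J : Ideal A} {M N : Matrix (Fin n) (Fin n) A}
    (h : ∀ i j, M i j ∈ J) : ∀ i j, (M * N) i j ∈ J := by
  intro i j
  rw [Matrix.mul_apply]
  exact Ideal.sum_mem _ fun l _ => J.mul_mem_right _ (h i l)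

lemma entMul' {J : Ideal A} {M N : Matrix (Fin n) (Fin n) A}
    (h : ∀ i j, N i j ∈ J) : ∀ i j, (M * N) i j ∈ J := by
  intro i j
  rw [Matrix.mul_apply]
  exact Ideal.sum_mem _ fun l _ => J.mul_mem_left _ (h l j)

lemma entMulMul {J1 J2 : Ideal A} {M N : Matrix (Fin n) (Fin n) A}
    (h1 : ∀ i j, M i j ∈ J1) (h2 : ∀ i j, N i j ∈ J2) :
    ∀ i j, (M * N) i j ∈ J1 * J2 := by
  intro i j
  rw [Matrix.mul_apply]
  exact Ideal.sum_mem _ fun l _ => Ideal.mul_mem_mul (h1 i l) (h2 l j)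

/-- Units congruent to `1` modulo a matrix ideal `J` form a subgroup. -/
def nearOne (J : Ideal A) (n : ℕ) : Subgroup (Matrix (Fin n) (Fin n) A)ˣ where
  carrier := {g | ∀ i j, ((g : Matrix (Fin n) (Fin n) A) - 1) i j ∈ J}
  one_mem' := by
    intro i j
    simp
  mul_mem' := by
    intro g h hg hh i j
    have key : ((↑(g * h) : Matrix (Fin n) (Fin n) A) - 1)
        = ((g : Matrix (Fin n) (Fin n) A) - 1) * ((h : Matrix (Fin n) (Fin n) A) - 1)
          + ((g : Matrix (Fin n) (Fin n) A) - 1) + ((h : Matrix (Fin n) (Fin n) A) - 1) := by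
      push_cast
      noncomm_ring
    rw [key]
    simp only [Matrix.add_apply]
    exact J.add_mem (J.add_mem (entMul hg i j) (hg i j)) (hh i j)
  inv_mem' := by
    intro g hg i j
    have h1 : (↑g⁻¹ : Matrix (Fin n) (Fin n) A) * g = 1 := Units.inv_mul g
    have key : ((↑g⁻¹ : Matrix (Fin n) (Fin n) A) - 1)
        = -((↑g⁻¹ : Matrix (Fin n) (Fin n) A) * ((g : Matrix (Fin n) (Fin n) A) - 1)) := by
      rw [mul_sub, h1, mul_one, neg_sub]
    rw [key]
    simp only [Matrix.neg_apply]
    exact J.neg_mem (entMul' hg i j)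

lemma nearOne_comm {J1 J2 : Ideal A} {g h : (Matrix (Fin n) (Fin n) A)ˣ}
    (hg : g ∈ nearOne J1 n) (hh : h ∈ nearOne J2 n) : ⁅g, h⁆ ∈ nearOne (J1 * J2) n := by
  set G : Matrix (Fin n) (Fin n) A := (g : Matrix (Fin n) (Fin n) A) with hG
  set H : Matrix (Fin n) (Fin n) A := (h : Matrix (Fin n) (Fin n) A) with hH
  set G' : Matrix (Fin n) (Fin n) A := ((g⁻¹ : _ˣ) : Matrix (Fin n) (Fin n) A) with hG'
  set H' : Matrix (Fin n) (Fin n) A := ((h⁻¹ : _ˣ) : Matrix (Fin n) (Fin n) A) with hH'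
  have hgi : G * G' = 1 := Units.mul_inv g
  have hhi : H * H' = 1 := Units.mul_inv h
  have hval : (↑⁅g, h⁆ : Matrix (Fin n) (Fin n) A) = G * H * G' * H' := by
    rw [commutatorElement_def, Units.val_mul, Units.val_mul, Units.val_mul]
  have e1 : (G * H - H * G) * (G' * H') = G * H * G' * H' - 1 := by
    rw [sub_mul]
    congr 1
    · simp only [mul_assoc]
    · rw [mul_assoc H G, ← mul_assoc G G', hgi, one_mul, hhi]
  have e2 : G * H - H * G = (G - 1) * (H - 1) - (H - 1) * (G - 1) := by noncomm_ring
  have key : (↑⁅g, h⁆ : Matrix (Fin n) (Fin n) A) - 1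
      = ((G - 1) * (H - 1) - (H - 1) * (G - 1)) * (G' * H') := by
    rw [hval, ← e2, e1]
  intro i j
  rw [key]
  apply entMul
  intro i' j'
  simp only [Matrix.sub_apply]
  refine Ideal.sub_mem _ (entMulMul hg hh i' j') ?_
  rw [mul_comm J1 J2]
  exact entMulMul hh hg i' j'

end Aux

/-- Let `A` be a commutative ring and `I ⊆ A` an ideal with `I^k = 0` for some `k ≥ 1`.  Then
the kernel of the reduction homomorphism `GL_n(A) → GL_n(A/I)` is a nilpotent group of
nilpotency class at most `k − 1`, i.e. its `(k−1)`-st lower central series term is trivial. -/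
theorem stmt6 {A : Type*} [CommRing A] (n : ℕ) (I : Ideal A) (k : ℕ) (hk : 1 ≤ k)
    (hI : I ^ k = ⊥) :
    let red : (Matrix (Fin n) (Fin n) A)ˣ →* (Matrix (Fin n) (Fin n) (A ⧸ I))ˣ :=
      Units.map ((Ideal.Quotient.mk I).mapMatrix.toMonoidHom)
    Subgroup.lowerCentralSeries (⊤ : Subgroup ↥(MonoidHom.ker red)) (k - 1) = ⊥ := by
  intro red
  set K := MonoidHom.ker red with hK
  -- every element of the kernel is ≡ 1 mod I
  have base : ∀ x : ↥K, (x : (Matrix (Fin n) (Fin n) A)ˣ) ∈ nearOne I n := by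
    intro x
    have hx : red (x : (Matrix (Fin n) (Fin n) A)ˣ) = 1 := x.2
    have h1 : (Ideal.Quotient.mk I).mapMatrix ((x : (Matrix (Fin n) (Fin n) A)ˣ) :
        Matrix (Fin n) (Fin n) A) = 1 := congrArg Units.val hx
    have h2 : (Ideal.Quotient.mk I).mapMatrix
        (((x : (Matrix (Fin n) (Fin n) A)ˣ) : Matrix (Fin n) (Fin n) A) - 1) = 0 := by
      rw [map_sub, map_one, h1, sub_self]
    intro i j
    have h3 := congrFun (congrFun h2 i) j
    rw [RingHom.mapMatrix_apply, Matrix.map_apply] at h3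
    exact Ideal.Quotient.eq_zero_iff_mem.mp h3
  have hcom : ∀ m : ℕ, Subgroup.lowerCentralSeries (⊤ : Subgroup ↥K) m ≤ (nearOne (I ^ (m + 1)) n).comap K.subtype := by
    intro m
    induction m with
    | zero =>
      intro x _
      rw [Subgroup.mem_comap, pow_one]
      exact base x
    | succ m ih =>
      rw [Subgroup.lowerCentralSeries_succ]
      apply Subgroup.commutator_le.mpr
      intro g hg h _
      have hg' : (g : (Matrix (Fin n) (Fin n) A)ˣ) ∈ nearOne (I ^ (m + 1)) n := ih hg
      have hh' : (h : (Matrix (Fin n) (Fin n) A)ˣ) ∈ nearOne I n := base h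
      rw [Subgroup.mem_comap]
      have := nearOne_comm hg' hh'
      rw [← pow_succ] at this
      have hmap : K.subtype ⁅g, h⁆ = ⁅K.subtype g, K.subtype h⁆ := map_commutatorElement _ _ _
      rw [hmap]
      exact this
  rw [eq_bot_iff]
  intro x hx
  have hx' := hcom (k - 1) hx
  rw [Subgroup.mem_comap, Nat.sub_add_cancel hk, hI] at hx'
  have hz : ((x : (Matrix (Fin n) (Fin n) A)ˣ) : Matrix (Fin n) (Fin n) A) - 1 = 0 := by
    ext i j
    simpa using hx' i j
  have hx1 : (x : (Matrix (Fin n) (Fin n) A)ˣ) = 1 := Units.ext (by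
    have := sub_eq_zero.mp hz
    simpa using this)
  simpa [Subgroup.mem_bot] using Subtype.ext hx1
end

section
/- Let Γ be a group, A a commutative ring, and ρ : Γ → GL_n(A) a group homomorphism. Let A[ε] = A[X]/(X²) be the ring of dual numbers over A. Then the set of group homomorphisms ρ̃ : Γ → GL_n(A[ε]) whose reduction modulo ε equals ρ is in natural bijection with the set of 1-cocycles, i.e. functions c : Γ → M_n(A) satisfying c(γδ) = c(γ) + ρ(γ)·c(δ)·ρ(γ)⁻¹ for all γ, δ ∈ Γ; the bijection sends c to the homomorphism γ ↦ (1 + ε·c(γ))·ρ(γ). -/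
open TrivSqZeroExt

namespace Stmt8Aux

variable {A : Type*} [CommRing A] {n : ℕ}

local notation "Mat" => Matrix (Fin n) (Fin n) A
local notation "MatD" => Matrix (Fin n) (Fin n) (DualNumber A)

def mfst (X : MatD) : Mat := X.map fst
def msnd (X : MatD) : Mat := X.map snd
def minl (X : Mat) : MatD := X.map inl
def minr (X : Mat) : MatD := X.map inr

lemma mfst_mul (X Y : MatD) : mfst (X * Y) = mfst X * mfst Y := by
  ext i j
  simp [mfst, Matrix.mul_apply, fst_sum, fst_mul]

lemma msnd_mul (X Y : MatD) : msnd (X * Y) = mfst X * msnd Y + msnd X * mfst Y := by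
  ext i j
  simp [msnd, mfst, Matrix.mul_apply, snd_sum, snd_mul, MulOpposite.smul_eq_mul_unop,
    smul_eq_mul, Finset.sum_add_distrib]

lemma mfst_minl (X : Mat) : mfst (minl X) = X := by ext i j; simp [mfst, minl]
lemma msnd_minl (X : Mat) : msnd (minl X) = 0 := by ext i j; simp [msnd, minl]
lemma mfst_minr (X : Mat) : mfst (minr X) = 0 := by ext i j; simp [mfst, minr]
lemma msnd_minr (X : Mat) : msnd (minr X) = X := by ext i j; simp [msnd, minr]

lemma eta (X : MatD) : minl (mfst X) + minr (msnd X) = X := by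
  ext i j <;> simp [minl, minr, mfst, msnd]

lemma minl_one : minl (1 : Mat) = 1 := by
  ext i j <;> by_cases h : i = j <;> simp [minl, Matrix.one_apply, h]

lemma minl_mul (X Y : Mat) : minl (X * Y) = minl X * minl Y := by
  ext i j <;>
    simp [minl, Matrix.mul_apply, fst_sum, snd_sum, fst_mul, snd_mul]

lemma minl_mul_minr (X Y : Mat) : minl X * minr Y = minr (X * Y) := by
  ext i j <;>
    simp [minl, minr, Matrix.mul_apply, fst_sum, snd_sum, fst_mul, snd_mul]
  all_goals exact Finset.sum_congr rfl fun k _ => mul_comm _ _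

lemma minr_mul_minl (X Y : Mat) : minr X * minl Y = minr (X * Y) := by
  ext i j <;>
    simp [minl, minr, Matrix.mul_apply, fst_sum, snd_sum, fst_mul, snd_mul,
      MulOpposite.smul_eq_mul_unop]

lemma minr_mul_minr (X Y : Mat) : minr X * minr Y = 0 := by
  ext i j <;>
    simp [minr, Matrix.mul_apply, fst_sum, snd_sum, fst_mul, snd_mul]

lemma minr_add (X Y : Mat) : minr (X + Y) = minr X + minr Y := by
  ext i j <;> simp [minr]

lemma minr_neg (X : Mat) : minr (-X) = -minr X := by
  ext i j <;> simp [minr]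

lemma key_mul (a b a' b' : Mat) :
    (minl a + minr b) * (minl a' + minr b') = minl (a * a') + minr (a * b' + b * a') := by
  rw [add_mul, mul_add, mul_add, minl_mul, minl_mul_minr, minr_mul_minl, minr_mul_minr,
    minr_add, add_zero, add_assoc]

lemma minr_zero : minr (0 : Mat) = 0 := by
  ext i j <;> simp [minr]

variable {Γ : Type*} [Group Γ]

def liftUnit (ρ : Γ →* Matˣ) (c : Γ → Mat) (γ : Γ) : MatDˣ where
  val := minl (ρ γ) + minr (c γ * (ρ γ : Mat))
  inv := minl ((((ρ γ)⁻¹ : Matˣ) : Mat)) + minr (-(((((ρ γ)⁻¹ : Matˣ)) : Mat) * c γ))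
  val_inv := by
    rw [key_mul]
    simp [mul_neg, neg_mul, mul_assoc, Units.mul_inv_cancel_left, Units.mul_inv,
      Units.inv_mul_cancel_left, Units.inv_mul, minl_one, minr_zero]
  inv_val := by
    rw [key_mul]
    simp [mul_neg, neg_mul, mul_assoc, Units.mul_inv_cancel_left, Units.mul_inv,
      Units.inv_mul_cancel_left, Units.inv_mul, minl_one, minr_zero]

lemma liftUnit_mul (ρ : Γ →* Matˣ) (c : Γ → Mat)
    (hc : ∀ γ δ : Γ, c (γ * δ) = c γ + (ρ γ : Mat) * c δ * ((((ρ γ)⁻¹ : Matˣ)) : Mat))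
    (γ δ : Γ) : liftUnit ρ c (γ * δ) = liftUnit ρ c γ * liftUnit ρ c δ := by
  apply Units.ext
  show minl ((ρ (γ * δ) : Mat)) + minr (c (γ * δ) * (ρ (γ * δ) : Mat))
      = (minl ((ρ γ : Mat)) + minr (c γ * (ρ γ : Mat)))
        * (minl ((ρ δ : Mat)) + minr (c δ * (ρ δ : Mat)))
  rw [key_mul, map_mul, Units.val_mul, hc γ δ]
  congr 1
  simp [add_mul, mul_assoc, Units.inv_mul_cancel_left, add_comm]

lemma cocycle_back (ρ' : Γ →* MatDˣ) (ρ : Γ →* Matˣ)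
    (h : ∀ γ : Γ, mfst (↑(ρ' γ)) = (ρ γ : Mat)) (γ δ : Γ) :
    msnd (↑(ρ' (γ * δ))) * ((((ρ (γ * δ))⁻¹ : Matˣ)) : Mat)
      = msnd (↑(ρ' γ)) * ((((ρ γ)⁻¹ : Matˣ)) : Mat)
        + (ρ γ : Mat) * (msnd (↑(ρ' δ)) * ((((ρ δ)⁻¹ : Matˣ)) : Mat))
          * ((((ρ γ)⁻¹ : Matˣ)) : Mat) := by
  rw [map_mul, map_mul, Units.val_mul, msnd_mul, h γ, h δ, mul_inv_rev, Units.val_mul]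
  simp [add_mul, mul_assoc, Units.mul_inv_cancel_left, add_comm]

lemma mfst_add (X Y : MatD) : mfst (X + Y) = mfst X + mfst Y := by
  ext i j; simp [mfst]

lemma msnd_add (X Y : MatD) : msnd (X + Y) = msnd X + msnd Y := by
  ext i j; simp [msnd]

lemma liftUnit_fst (ρ : Γ →* Matˣ) (c : Γ → Mat) (γ : Γ) :
    mfst (↑(liftUnit ρ c γ)) = (ρ γ : Mat) := by
  show mfst (minl _ + minr _) = _
  rw [mfst_add, mfst_minl, mfst_minr, add_zero]

lemma liftUnit_snd (ρ : Γ →* Matˣ) (c : Γ → Mat) (γ : Γ) :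
    msnd (↑(liftUnit ρ c γ)) = c γ * (ρ γ : Mat) := by
  show msnd (minl _ + minr _) = _
  rw [msnd_add, msnd_minl, msnd_minr, zero_add]

end Stmt8Aux


/-- Let `ρ : Γ → GL_n(A)` be a representation and `A[ε]` the dual numbers.  The set of
homomorphisms `ρ' : Γ → GL_n(A[ε])` lifting `ρ` (i.e. reducing to `ρ` modulo `ε`) is in
natural bijection with the set of `1`-cocycles `c : Γ → M_n(A)`, i.e. functions satisfying
`c(γδ) = c(γ) + ρ(γ)·c(δ)·ρ(γ)⁻¹`; the bijection sends `c` to `γ ↦ (1 + ε·c(γ))·ρ(γ)`. -/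
theorem stmt8 {A : Type*} [CommRing A] {Γ : Type*} [Group Γ] (n : ℕ)
    (ρ : Γ →* (Matrix (Fin n) (Fin n) A)ˣ) :
    let Mat := Matrix (Fin n) (Fin n) A
    let MatD := Matrix (Fin n) (Fin n) (DualNumber A)
    let Coc := {c : Γ → Mat //
      ∀ γ δ : Γ, c (γ * δ) = c γ + (ρ γ : Mat) * c δ * ((((ρ γ)⁻¹ : Matˣ)) : Mat)}
    let Lift := {ρ' : Γ →* MatDˣ //
      ∀ (γ : Γ) (i j : Fin n),
        TrivSqZeroExt.fst ((ρ' γ : MatD) i j) = (ρ γ : Mat) i j}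
    ∃ e : Coc ≃ Lift, ∀ (c : Coc) (γ : Γ),
      ((e c).1 γ : MatD) =
        (1 + (c.1 γ).map (TrivSqZeroExt.inr : A → DualNumber A)) *
          ((ρ γ : Mat).map (TrivSqZeroExt.inl : A → DualNumber A)) := by
  intro Mat MatD Coc Lift
  refine ⟨⟨fun c => ⟨MonoidHom.mk' (Stmt8Aux.liftUnit ρ c.1)
      (Stmt8Aux.liftUnit_mul ρ c.1 c.2), ?_⟩,
    fun ρ' => ⟨fun γ => Stmt8Aux.msnd (↑(ρ'.1 γ)) * (((ρ γ)⁻¹ : Matˣ) : Mat),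
      Stmt8Aux.cocycle_back ρ'.1 ρ (fun γ => Matrix.ext fun i j => ρ'.2 γ i j)⟩,
    ?_, ?_⟩, ?_⟩
  · intro γ i j
    exact Matrix.ext_iff.mpr (Stmt8Aux.liftUnit_fst ρ c.1 γ) i j
  · intro c
    apply Subtype.ext
    funext γ
    show Stmt8Aux.msnd (↑(Stmt8Aux.liftUnit ρ c.1 γ)) * _ = c.1 γ
    rw [Stmt8Aux.liftUnit_snd]
    exact Units.mul_inv_cancel_right _ _
  · intro ρ'
    apply Subtype.ext
    apply MonoidHom.ext
    intro γ
    apply Units.ext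
    show Stmt8Aux.minl ((ρ γ : Mat))
        + Stmt8Aux.minr (Stmt8Aux.msnd (↑(ρ'.1 γ)) * (((ρ γ)⁻¹ : Matˣ) : Mat) * (ρ γ : Mat))
      = (↑(ρ'.1 γ) : MatD)
    rw [Units.inv_mul_cancel_right]
    have h : Stmt8Aux.mfst (↑(ρ'.1 γ)) = (ρ γ : Mat) := Matrix.ext fun i j => ρ'.2 γ i j
    rw [← h, Stmt8Aux.eta]
  · intro c γ
    show Stmt8Aux.minl ((ρ γ : Mat)) + Stmt8Aux.minr (c.1 γ * (ρ γ : Mat))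
      = (1 + Stmt8Aux.minr (c.1 γ)) * Stmt8Aux.minl ((ρ γ : Mat))
    rw [add_mul, one_mul, Stmt8Aux.minr_mul_minl]
end

section
/- Let F be a free group on a set S, let k be a commutative ring, and let M be any representation of F over k (i.e. a k-module with a k-linear F-action). Then the group cohomology H^n(F, M) vanishes for all n ≥ 2. -/
noncomputable section

open CategoryTheory groupCohomology

universe u

namespace Stmt11Aux

variable {k : Type u} [CommRing k] {G : Type u} [Group G]

/-- abbreviation for the inhomogeneous cochain differential as a linear map -/
abbrev D (A : Rep.{u} k G) (n : ℕ) : ((Fin n → G) → A) →ₗ[k] ((Fin (n + 1) → G) → A) :=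
  (inhomogeneousCochains.d (k := k) (G := G) A n).hom

lemma d_natural {A B : Rep.{u} k G} (φ : A ⟶ B) (n : ℕ) (f : (Fin n → G) → A) :
    D B n (fun g => φ.hom (f g)) = fun g => φ.hom (D A n f g) := by
  funext g
  simp only [inhomogeneousCochains.d_hom_apply, map_add, map_sum, map_smul,
    Rep.hom_comm_apply]

/-- the coinduced representation on `G → A` -/
def coindρ (A : Rep.{u} k G) : Representation k G (G → A) where
  toFun g :=
    { toFun := fun φ x => φ (x * g)
      map_add' := fun _ _ => rfl
      map_smul' := fun _ _ => rfl }
  map_one' := by ext φ x; simp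
  map_mul' g h := by ext φ x; simp [mul_assoc]

def coind (A : Rep.{u} k G) : Rep.{u} k G := Rep.of (coindρ A)

@[simp] lemma coind_ρ_apply (A : Rep.{u} k G) (g : G) (φ : coind A) (x : G) :
    ((coind A).ρ g φ) x = φ (x * g) := rfl

/-- the underlying linear map of the canonical embedding `A → coind A` -/
def ιhom (A : Rep.{u} k G) : A →ₗ[k] (G → A) where
  toFun m x := A.ρ x m
  map_add' _ _ := by funext x; simp [Pi.add_apply]
  map_smul' _ _ := by funext x; simp [Pi.smul_apply]

lemma ι_comm (A : Rep.{u} k G) (g : G) :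
    (ιhom A) ∘ₗ (A.ρ g) = (coindρ A g) ∘ₗ (ιhom A) := by
  ext m x
  show A.ρ x (A.ρ g m) = A.ρ (x * g) m
  rw [map_mul]
  rfl

/-- the canonical embedding `A → coind A` -/
def ι (A : Rep.{u} k G) : A ⟶ coind A :=
  ConcreteCategory.ofHom ⟨ιhom A, fun g => ι_comm A g⟩

@[simp] lemma ι_apply (A : Rep.{u} k G) (m : A) (x : G) : (ι A).hom m x = A.ρ x m := rfl

lemma ι_injective (A : Rep.{u} k G) {m m' : A} (h : (ι A).hom m = (ι A).hom m') : m = m' := by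
  have := congrFun h 1
  simpa using this


/-! ### The quotient representation `coind A / A` -/

variable (A : Rep.{u} k G)

abbrev N : Submodule k (G → A) := LinearMap.range (ιhom A)

lemma N_le (g : G) : N A ≤ (N A).comap (coindρ A g) := by
  rintro _ ⟨m, rfl⟩
  exact ⟨A.ρ g m, by
    have := LinearMap.congr_fun (ι_comm A g) m
    simpa using this⟩

/-- the quotient representation -/
def quotρ : Representation k G ((G → A) ⧸ N A) where
  toFun g := Submodule.mapQ (N A) (N A) (coindρ A g) (N_le A g)
  map_one' := by
    apply Submodule.linearMap_qext
    ext φ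
    simp [Submodule.mapQ_apply]
  map_mul' g h := by
    apply Submodule.linearMap_qext
    ext φ
    simp [Submodule.mapQ_apply]

def quotRep : Rep.{u} k G := Rep.of (quotρ A)

lemma π_comm (g : G) :
    ((N A).mkQ) ∘ₗ (coindρ A g) = (quotρ A g) ∘ₗ ((N A).mkQ) := by
  ext φ
  simp [Submodule.mapQ_apply, quotρ]

/-- the projection `coind A ⟶ quotRep A` -/
def π : coind A ⟶ quotRep A :=
  ConcreteCategory.ofHom ⟨(N A).mkQ, fun g => π_comm A g⟩

lemma π_ι (m : A) : (π A).hom ((ι A).hom m) = 0 := by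
  show (N A).mkQ (ιhom A m) = 0
  rw [Submodule.mkQ_apply, Submodule.Quotient.mk_eq_zero]
  exact ⟨m, rfl⟩

lemma π_surjective : Function.Surjective (π A).hom :=
  by exact Submodule.mkQ_surjective (N A)

lemma π_ker {φ : coind A} (h : (π A).hom φ = 0) : ∃ m : A, (ι A).hom m = φ := by
  have : φ ∈ N A := (Submodule.Quotient.mk_eq_zero (N A) (x := φ)).mp h
  exact LinearMap.mem_range.mp this


/-! ### Fin lemmas -/

lemma contractNth_zero_cons {n : ℕ} {α : Type*} (op : α → α → α) (x : α) (g : Fin (n + 1) → α) :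
    Fin.contractNth 0 op (Fin.cons x g) = Fin.cons (op x (g 0)) (fun i => g i.succ) := by
  funext i
  induction i using Fin.cases with
  | zero =>
    rw [Fin.contractNth_apply_of_eq _ _ _ _ (by simp)]
    simp [Fin.succ_zero_eq_one]
  | succ i =>
    rw [Fin.contractNth_apply_of_gt _ _ _ _ (by simp), Fin.cons_succ, Fin.cons_succ]

lemma contractNth_succ_cons {n : ℕ} {α : Type*} (op : α → α → α) (j : Fin (n + 1)) (x : α)
    (g : Fin (n + 1) → α) :
    Fin.contractNth j.succ op (Fin.cons x g) = Fin.cons x (Fin.contractNth j op g) := by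
  funext i
  induction i using Fin.cases with
  | zero =>
    rw [Fin.contractNth_apply_of_lt _ _ _ _ (by simp), Fin.castSucc_zero, Fin.cons_zero,
      Fin.cons_zero]
  | succ i =>
    rcases lt_trichotomy (i : ℕ) (j : ℕ) with h | h | h
    · rw [Fin.contractNth_apply_of_lt _ _ _ _ (by simpa using h), Fin.cons_succ,
        Fin.contractNth_apply_of_lt _ _ _ _ h, ← Fin.succ_castSucc, Fin.cons_succ]
    · rw [Fin.contractNth_apply_of_eq _ _ _ _ (by simpa using h), Fin.cons_succ, Fin.cons_succ,
        Fin.contractNth_apply_of_eq _ _ _ _ h, ← Fin.succ_castSucc, Fin.cons_succ]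
    · rw [Fin.contractNth_apply_of_gt _ _ _ _ (by simpa using h), Fin.cons_succ, Fin.cons_succ,
        Fin.contractNth_apply_of_gt _ _ _ _ h]


/-! ### The contracting homotopy on cochains with coinduced coefficients -/

def sig (A : Rep.{u} k G) (n : ℕ) (f : (Fin (n + 1) → G) → coind A) : (Fin n → G) → coind A :=
  fun g => (fun x => f (Fin.cons x g) 1)

@[simp] lemma coind_add_apply (A : Rep.{u} k G) (φ ψ : coind A) (x : G) :
    (φ + ψ) x = φ x + ψ x := rfl

@[simp] lemma coind_smul_apply (A : Rep.{u} k G) (c : k) (φ : coind A) (x : G) :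
    (c • φ) x = c • φ x := rfl

@[simp] lemma coind_neg_apply (A : Rep.{u} k G) (φ : coind A) (x : G) :
    (-φ) x = -(φ x) := rfl

@[simp] lemma coind_zero_apply (A : Rep.{u} k G) (x : G) : (0 : coind A) x = 0 := rfl

@[simp] lemma coind_sum_apply (A : Rep.{u} k G) {ι : Type*} (s : Finset ι) (φ : ι → coind A)
    (x : G) : (∑ i ∈ s, φ i) x = ∑ i ∈ s, φ i x := by
  classical
  induction s using Finset.induction with
  | empty => rfl
  | insert _ _ h ih => rw [Finset.sum_insert h, Finset.sum_insert h, coind_add_apply, ih]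

@[simp] lemma sig_apply (A : Rep.{u} k G) (n : ℕ) (f : (Fin (n + 1) → G) → coind A)
    (g : Fin n → G) (x : G) : sig A n f g x = f (Fin.cons x g) 1 := rfl

lemma D_coind_apply (A : Rep.{u} k G) (n : ℕ) (f : (Fin n → G) → coind A)
    (g : Fin (n + 1) → G) (x : G) :
    (D (coind A) n f g) x =
      (f (fun i => g i.succ)) (x * g 0) +
        ∑ j : Fin (n + 1), (-1 : k) ^ ((j : ℕ) + 1) • (f (Fin.contractNth j (· * ·) g)) x := by
  simp only [inhomogeneousCochains.d_hom_apply, coind_add_apply, coind_sum_apply,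
    coind_smul_apply, coind_ρ_apply]

lemma homotopy (A : Rep.{u} k G) (n : ℕ) (f : (Fin (n + 1) → G) → coind A)
    (g : Fin (n + 1) → G) (x : G) :
    (D (coind A) n (sig A n f) g) x + (sig A (n + 1) (D (coind A) (n + 1) f) g) x = f g x := by
  rw [sig_apply, D_coind_apply, D_coind_apply]
  simp only [sig_apply, Fin.cons_zero, Fin.cons_succ, one_mul,
    contractNth_zero_cons, contractNth_succ_cons, Fin.sum_univ_succ, Fin.val_zero, Fin.val_succ,
    pow_succ, pow_zero, one_mul, mul_neg_one, neg_smul, one_smul, neg_neg,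
    Finset.sum_neg_distrib]
  abel


/-! ### generic abelian-group shuffles -/

lemma shuffle1 {A : Type*} [AddCommGroup A] {a b c d : A} (h : a - b + c - d = 0) :
    b = a + c - d := by
  have h2 : b - (a + c - d) = -(a - b + c - d) := by abel
  rw [h, neg_zero] at h2
  exact sub_eq_zero.mp h2

lemma shuffle2 {A : Type*} [AddCommGroup A] {a b c d : A} (h : a - b + c - d = 0) :
    a = b - c + d := by
  have h2 : a - (b - c + d) = a - b + c - d := by abel
  rw [h] at h2
  exact sub_eq_zero.mp h2

/-! ### small contractNth computations -/

section SmallContract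

variable {α : Type*} [Mul α] (a b c : α)

lemma contract3_0 : Fin.contractNth (0 : Fin (2 + 1)) (· * ·) ![a, b, c] = ![a * b, c] := by
  funext i
  fin_cases i <;> simp [Fin.contractNth]

lemma contract3_1 : Fin.contractNth ((0 : Fin 2).succ) (· * ·) ![a, b, c] = ![a, b * c] := by
  funext i
  fin_cases i <;> simp [Fin.contractNth]

lemma contract3_2 : Fin.contractNth ((0 : Fin 1).succ.succ) (· * ·) ![a, b, c] = ![a, b] := by
  funext i
  fin_cases i <;> simp [Fin.contractNth]

lemma succ3 : (fun i : Fin 2 => ![a, b, c] i.succ) = ![b, c] := by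
  funext i
  fin_cases i <;> rfl

lemma contract2_0 (g : Fin 2 → α) :
    Fin.contractNth (0 : Fin (1 + 1)) (· * ·) g = ![g 0 * g 1] := by
  funext i
  fin_cases i <;> simp [Fin.contractNth]

lemma contract2_1 (g : Fin 2 → α) :
    Fin.contractNth ((0 : Fin 1).succ) (· * ·) g = ![g 0] := by
  funext i
  fin_cases i <;> simp [Fin.contractNth]

lemma succ2 (g : Fin 2 → α) : (fun i : Fin 1 => g i.succ) = ![g 1] := by
  funext i
  fin_cases i <;> rfl

lemma eta2 (g : Fin 2 → α) : ![g 0, g 1] = g := by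
  funext i
  fin_cases i <;> rfl

end SmallContract

/-! ### the degree 2 case over a free group -/

lemma base {S : Type u} (M : Rep.{u} k (FreeGroup S)) (f : (Fin 2 → FreeGroup S) → M)
    (hf : D M 2 f = 0) : ∃ h : (Fin 1 → FreeGroup S) → M, D M 1 h = f := by
  have coc : ∀ a b c : FreeGroup S,
      M.ρ a (f ![b, c]) - f ![a * b, c] + f ![a, b * c] - f ![a, b] = 0 := by
    intro a b c
    have h0 := congrFun hf ![a, b, c]
    simp only [inhomogeneousCochains.d_hom_apply, Pi.zero_apply, Fin.sum_univ_succ,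
      Fin.sum_univ_one] at h0
    rw [show (![a, b, c] : Fin 3 → FreeGroup S) 0 = a from rfl, succ3, contract3_0, contract3_1,
      contract3_2] at h0
    simp only [Fin.val_succ, Fin.val_zero] at h0
    norm_num at h0
    calc M.ρ a (f ![b, c]) - f ![a * b, c] + f ![a, b * c] - f ![a, b]
        = M.ρ a (f ![b, c]) + (-f ![a * b, c] + (f ![a, b * c] + -f ![a, b])) := by abel
      _ = 0 := h0
  set c0 : M := f ![1, 1] with hc0
  have f_g1 : ∀ g : FreeGroup S, f ![g, 1] = M.ρ g c0 := by
    intro g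
    have h := coc g 1 1
    simp only [mul_one, one_mul] at h
    have h2 : M.ρ g c0 - f ![g, 1] = 0 := by rw [← h]; abel
    rw [sub_eq_zero] at h2
    exact h2.symm
  have f_1g : ∀ g : FreeGroup S, f ![1, g] = c0 := by
    intro g
    have h := coc 1 1 g
    simp only [one_mul, map_one, Module.End.one_apply] at h
    have h2 : f ![1, g] - c0 = 0 := by rw [← h]; abel
    rwa [sub_eq_zero] at h2
  -- group structure on M × FreeGroup S
  letI : Mul (↥M × FreeGroup S) :=
    ⟨fun p q => (p.1 + M.ρ p.2 q.1 + f ![p.2, q.2], p.2 * q.2)⟩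
  letI : One (↥M × FreeGroup S) := ⟨(-c0, 1)⟩
  letI : Inv (↥M × FreeGroup S) :=
    ⟨fun p => (-(M.ρ p.2⁻¹ (p.1 + f ![p.2, p.2⁻¹] + c0)), p.2⁻¹)⟩
  have mul_def : ∀ p q : ↥M × FreeGroup S,
      p * q = (p.1 + M.ρ p.2 q.1 + f ![p.2, q.2], p.2 * q.2) := fun _ _ => rfl
  letI : Group (↥M × FreeGroup S) := Group.ofLeftAxioms
    (fun p q r => by
      rw [mul_def, mul_def, mul_def, mul_def, Prod.ext_iff]
      refine ⟨?_, mul_assoc _ _ _⟩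
      simp only
      rw [shuffle1 (coc p.2 q.2 r.2)]
      simp only [map_add, map_mul, Module.End.mul_apply]
      abel)
    (fun p => by
      rw [show (1 : ↥M × FreeGroup S) = (-c0, 1) from rfl, mul_def, Prod.ext_iff]
      refine ⟨?_, one_mul _⟩
      simp only [map_one, Module.End.one_apply, f_1g]
      abel)
    (fun p => by
      rw [show ∀ q : ↥M × FreeGroup S, q⁻¹ =
        (-(M.ρ q.2⁻¹ (q.1 + f ![q.2, q.2⁻¹] + c0)), q.2⁻¹) from fun _ => rfl, mul_def,
        Prod.ext_iff]
      refine ⟨?_, inv_mul_cancel _⟩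
      simp only
      rw [show (1 : ↥M × FreeGroup S) = (-c0, 1) from rfl]
      simp only
      have h := coc p.2⁻¹ p.2 p.2⁻¹
      rw [inv_mul_cancel, mul_inv_cancel, f_1g, f_g1] at h
      rw [map_add, map_add, shuffle2 h]
      abel)
  -- the section coming from freeness
  let sndHom : (↥M × FreeGroup S) →* FreeGroup S :=
    { toFun := Prod.snd, map_one' := rfl, map_mul' := fun _ _ => rfl }
  let φ : FreeGroup S →* (↥M × FreeGroup S) :=
    FreeGroup.lift (fun s => ((0 : ↥M), FreeGroup.of s))
  have hsnd : ∀ w : FreeGroup S, (φ w).2 = w := by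
    intro w
    have h := FreeGroup.ext_hom (sndHom.comp φ) (MonoidHom.id (FreeGroup S)) (fun s => by
      simp only [MonoidHom.comp_apply, MonoidHom.id_apply]
      rw [show φ (FreeGroup.of s) = ((0 : ↥M), FreeGroup.of s) from FreeGroup.lift_apply_of]
      rfl)
    exact DFunLike.congr_fun h w
  have hmul : ∀ u v : FreeGroup S,
      (φ (u * v)).1 = (φ u).1 + M.ρ u ((φ v).1) + f ![u, v] := by
    intro u v
    have h := congrArg Prod.fst (φ.map_mul u v)
    rw [mul_def] at h
    simpa only [hsnd] using h
  refine ⟨fun v => -(φ (v 0)).1, ?_⟩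
  funext g
  have key := hmul (g 0) (g 1)
  simp only [inhomogeneousCochains.d_hom_apply, Fin.sum_univ_succ, Fin.sum_univ_zero]
  rw [contract2_0, contract2_1]
  simp only [Matrix.cons_val_zero, Fin.val_succ, Fin.val_zero, add_zero]
  rw [show (Fin.succ 0 : Fin 2) = 1 from rfl]
  norm_num
  rw [← eta2 g,
    show f ![g 0, g 1] = (φ (g 0 * g 1)).1 - (φ (g 0)).1 - M.ρ (g 0) ((φ (g 1)).1) from by
      rw [key]; abel]
  simp only [Matrix.cons_val_zero, Matrix.cons_val_one, Matrix.head_cons]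
  rw [← φ.map_mul, key]
  abel


lemma D_D (A : Rep.{u} k G) (n : ℕ) (x : (Fin n → G) → A) : D A (n + 1) (D A n x) = 0 := by
  have h := inhomogeneousCochains.d_comp_d (A := A) (n := n)
  have h2 := congrArg (fun φ => φ.hom x) h
  simpa using h2

/-! ### the main induction -/

lemma main {S : Type u} (m : ℕ) (M : Rep.{u} k (FreeGroup S)) (f : (Fin (m + 2) → FreeGroup S) → M)
    (hf : D M (m + 2) f = 0) : ∃ h : (Fin (m + 1) → FreeGroup S) → M, D M (m + 1) h = f := by
  induction m generalizing M with
  | zero => exact base M f hf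
  | succ m ih =>
    have hdu₀ : D (coind M) (m + 1 + 2) (fun g => (ι M).hom (f g)) = 0 := by
      rw [d_natural (ι M) _ f]
      funext g
      have h1 := congrFun hf g
      simp only [Pi.zero_apply] at h1
      simp [h1]
    have hdu : D (coind M) (m + 1 + 1) (sig M (m + 1 + 1) (fun g => (ι M).hom (f g))) =
        fun g => (ι M).hom (f g) := by
      funext g
      funext x
      have h2 := homotopy M (m + 1 + 1) (fun g => (ι M).hom (f g)) g x
      rw [hdu₀] at h2
      simpa using h2
    have hdv : D (quotRep M) (m + 1 + 1)
        (fun g => (π M).hom (sig M (m + 1 + 1) (fun g' => (ι M).hom (f g')) g)) = 0 := by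
      rw [d_natural (π M) _ _]
      funext g
      rw [congrFun hdu g]
      simpa using π_ι M (f g)
    obtain ⟨w, hw⟩ := ih (quotRep M) _ hdv
    set wt : (Fin (m + 1) → FreeGroup S) → coind M :=
      fun t => Function.surjInv (π_surjective M) (w t) with hwt
    have hlift : ∀ t, (π M).hom (wt t) = w t := fun t => Function.surjInv_eq _ _
    set u' : (Fin (m + 1 + 1) → FreeGroup S) → coind M :=
      (sig M (m + 1 + 1) (fun g' => (ι M).hom (f g'))) - D (coind M) (m + 1) wt with hu'
    have hπu' : ∀ t, (π M).hom (u' t) = 0 := by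
      intro t
      rw [hu', Pi.sub_apply, map_sub]
      have h3 := congrFun (d_natural (π M) (m + 1) wt) t
      rw [← h3]
      have h4 : (fun t => (π M).hom (wt t)) = w := funext hlift
      rw [h4, hw]
      exact sub_self _
    choose hfun hh using fun t => π_ker M (hπu' t)
    refine ⟨hfun, ?_⟩
    funext t
    apply ι_injective M
    have h5 := congrFun (d_natural (ι M) (m + 1 + 1) hfun) t
    rw [← h5]
    have h6 : (fun t => (ι M).hom (hfun t)) = u' := funext hh
    rw [h6, hu', map_sub, D_D]
    rw [Pi.sub_apply]
    simp [congrFun hdu t]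

end Stmt11Aux

open Stmt11Aux in
/-- Let `F` be a free group on a set `S`, `k` a commutative ring, and `M` any representation
of `F` over `k`.  Then the group cohomology `H^n(F, M)` vanishes for all `n ≥ 2`. -/
theorem stmt11 {k S : Type u} [CommRing k] (M : Rep k (FreeGroup S)) (n : ℕ) (hn : 2 ≤ n) :
    CategoryTheory.Limits.IsZero (groupCohomology M n) := by
  obtain ⟨m, rfl⟩ : ∃ m, n = m + 2 := ⟨n - 2, by omega⟩
  rw [show groupCohomology M (m + 2) =
    (groupCohomology.inhomogeneousCochains M).homology (m + 2) from rfl]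
  rw [← HomologicalComplex.exactAt_iff_isZero_homology]
  rw [HomologicalComplex.exactAt_iff' _ (m + 1) (m + 2) (m + 3) (by simp) (by simp)]
  rw [ShortComplex.moduleCat_exact_iff]
  intro f hf
  have hf' : D M (m + 2) f = 0 := by
    have h1 : (groupCohomology.inhomogeneousCochains M).d (m + 2) (m + 3) f = 0 := hf
    rw [show (groupCohomology.inhomogeneousCochains M).d (m + 2) (m + 3) =
      ModuleCat.ofHom (D M (m + 2)) from groupCohomology.inhomogeneousCochains.d_def M (m + 2)] at h1
    exact h1
  obtain ⟨h, hh⟩ := main m M f hf'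
  refine ⟨h, ?_⟩
  show (groupCohomology.inhomogeneousCochains M).d (m + 1) (m + 2) h = f
  rw [show (groupCohomology.inhomogeneousCochains M).d (m + 1) (m + 2) =
    ModuleCat.ofHom (D M (m + 1)) from groupCohomology.inhomogeneousCochains.d_def M (m + 1)]
  exact hh

end
end

section
/- Let S be a profinite topological space (compact, Hausdorff, totally disconnected) and let 0 → V' → V → V'' → 0 be a short exact sequence of abelian groups. Then the induced sequence 0 → C_lc(S, V') → C_lc(S, V) → C_lc(S, V'') → 0 of abelian groups of locally constant functions is exact; in particular every locally constant function S → V'' lifts to a locally constant function S → V. -/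
/-- Let `S` be a profinite space (compact, Hausdorff, totally disconnected) and
`0 → V' → V → V'' → 0` a short exact sequence of abelian groups.  Then the induced sequence
`0 → C_lc(S, V') → C_lc(S, V) → C_lc(S, V'') → 0` of groups of locally constant functions is
exact; in particular every locally constant function `S → V''` lifts to a locally constant
function `S → V`. -/
theorem stmt12 {S : Type*} [TopologicalSpace S] [CompactSpace S] [T2Space S]
    [TotallyDisconnectedSpace S]
    {V' V V'' : Type*} [AddCommGroup V'] [AddCommGroup V] [AddCommGroup V'']
    (f : V' →+ V) (g : V →+ V'')
    (hf : Function.Injective f) (hg : Function.Surjective g)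
    (hfg : ∀ v : V, g v = 0 ↔ ∃ w : V', f w = v) :
    Function.Injective
        (LocallyConstant.map (f : V' → V) : LocallyConstant S V' → LocallyConstant S V) ∧
      (∀ h : LocallyConstant S V,
        LocallyConstant.map (g : V → V'') h = 0 ↔
          ∃ h' : LocallyConstant S V', LocallyConstant.map (f : V' → V) h' = h) ∧
      Function.Surjective
        (LocallyConstant.map (g : V → V'') : LocallyConstant S V → LocallyConstant S V'') := by
  refine ⟨?_, ?_, ?_⟩
  · intro h₁ h₂ he
    ext s
    exact hf (congrArg (fun k => k s) he)
  · intro h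
    constructor
    · intro hz
      refine ⟨h.map (Function.invFun f), ?_⟩
      ext s
      have : g (h s) = 0 := congrArg (fun k => k s) hz
      obtain ⟨w, hw⟩ := (hfg (h s)).1 this
      simp only [LocallyConstant.map_apply]
      exact Function.invFun_eq ⟨w, hw⟩
    · rintro ⟨h', rfl⟩
      ext s
      simp only [LocallyConstant.map_apply, LocallyConstant.coe_zero, Pi.zero_apply]
      exact (hfg (f (h' s))).2 ⟨h' s, rfl⟩
  · intro h
    refine ⟨h.map (Function.invFun g), ?_⟩
    ext s
    simp only [LocallyConstant.map_apply]
    exact Function.invFun_eq (hg (h s))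
end

section
/- Let K be an algebraically closed field, m ≥ 1, and q ≥ 2 an integer. If g ∈ GL_m(K) satisfies charpoly(g^q) = charpoly(g), then setting N = q^{m!} − 1, the element g^N is unipotent: charpoly(g^N) = (t − 1)^m, equivalently (g^N − 1)^m = 0. -/
set_option linter.unusedSectionVars false

open Polynomial Matrix in
private lemma eval_charpoly_aux {K : Type*} [Field K] {m : ℕ} (M : Matrix (Fin m) (Fin m) K)
    (μ : K) : M.charpoly.eval μ = (Matrix.scalar (Fin m) μ - M).det := by
  rw [Matrix.charpoly, _root_.eval_det, matPolyEquiv_charmatrix]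
  simp

open Polynomial Matrix in
private lemma mem_spectrum_iff_isRoot_aux {K : Type*} [Field K] {m : ℕ}
    (M : Matrix (Fin m) (Fin m) K) (μ : K) :
    μ ∈ spectrum K M ↔ M.charpoly.IsRoot μ := by
  have halg : algebraMap K (Matrix (Fin m) (Fin m) K) μ = Matrix.scalar (Fin m) μ := by
    rw [Matrix.scalar_apply]; ext i j
    simp [Matrix.algebraMap_matrix_apply, Matrix.diagonal]
  rw [spectrum.mem_iff, Matrix.isUnit_iff_isUnit_det, isUnit_iff_ne_zero, not_not,
    IsRoot, eval_charpoly_aux, halg]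

/-- Let `K` be an algebraically closed field, `m ≥ 1`, `q ≥ 2`.  If `g ∈ GL_m(K)` satisfies
`charpoly(g^q) = charpoly(g)` then, with `N = q^{m!} − 1`, the element `g^N` is unipotent:
its characteristic polynomial is `(t − 1)^m`, equivalently `(g^N − 1)^m = 0`. -/
theorem stmt15 {K : Type*} [Field K] [IsAlgClosed K] (m : ℕ) (hm : 1 ≤ m) (q : ℕ)
    (hq : 2 ≤ q) (g : (Matrix (Fin m) (Fin m) K)ˣ)
    (h : ((g : Matrix (Fin m) (Fin m) K) ^ q).charpoly =
      (g : Matrix (Fin m) (Fin m) K).charpoly) :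
    ((g : Matrix (Fin m) (Fin m) K) ^ (q ^ Nat.factorial m - 1)).charpoly =
        (Polynomial.X - 1) ^ m ∧
      ((g : Matrix (Fin m) (Fin m) K) ^ (q ^ Nat.factorial m - 1) - 1) ^ m = 0 := by
  classical
  open Polynomial Matrix in
  set A := (g : Matrix (Fin m) (Fin m) K) with hA
  have hqfac : q ≤ q ^ m.factorial := Nat.le_self_pow (Nat.factorial_ne_zero m) q
  set N := q ^ Nat.factorial m - 1 with hNdef
  have hNpos : 0 < N := by omega
  have hmono : A.charpoly.Monic := A.charpoly_monic
  have hdeg : A.charpoly.natDegree = m := by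
    simpa using A.charpoly_natDegree_eq_dim
  set S : Set K := spectrum K A with hS
  have hSroot : ∀ x, x ∈ S ↔ A.charpoly.IsRoot x := fun x => mem_spectrum_iff_isRoot_aux A x
  have hsub : S ⊆ ↑A.charpoly.roots.toFinset := by
    intro x hx
    simp only [Finset.coe_sort_coe, Multiset.mem_toFinset, Finset.mem_coe]
    rw [Polynomial.mem_roots hmono.ne_zero]
    exact (hSroot x).mp hx
  have hfin : S.Finite :=
    Set.Finite.subset (A.charpoly.roots.toFinset).finite_toSet hsub
  haveI : Fintype S := hfin.fintype
  have hcard : Fintype.card S ≤ m := by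
    have h1 : S.toFinset ⊆ A.charpoly.roots.toFinset := by
      intro x hx
      exact hsub (Set.mem_toFinset.mp hx)
    calc Fintype.card S = S.toFinset.card := (Set.toFinset_card S).symm
      _ ≤ A.charpoly.roots.toFinset.card := Finset.card_le_card h1
      _ ≤ Multiset.card A.charpoly.roots := Multiset.toFinset_card_le _
      _ ≤ A.charpoly.natDegree := A.charpoly.card_roots'
      _ = m := hdeg
  have hSq : (fun x : K => x ^ q) '' S = S := by
    rw [hS, ← spectrum.map_pow_of_pos A (by omega : 0 < q)]
    ext x
    rw [mem_spectrum_iff_isRoot_aux, mem_spectrum_iff_isRoot_aux, h]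
  have hf : ∀ x : S, (x : K) ^ q ∈ S := fun x => by
    have hmem : (x : K) ^ q ∈ (fun x : K => x ^ q) '' S := ⟨x, x.2, rfl⟩
    rwa [hSq] at hmem
  set f : S → S := fun x => ⟨(x : K) ^ q, hf x⟩ with hfdef
  have hsurj : Function.Surjective f := by
    intro y
    have hy : (y : K) ∈ (fun x : K => x ^ q) '' S := by rw [hSq]; exact y.2
    obtain ⟨x, hx, hxy⟩ := hy
    exact ⟨⟨x, hx⟩, Subtype.ext hxy⟩
  have hbij : Function.Bijective f :=
    ⟨(Finite.injective_iff_surjective).mpr hsurj, hsurj⟩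
  set e : Equiv.Perm S := Equiv.ofBijective f hbij with hedef
  have horder : e ^ m.factorial = 1 := by
    refine orderOf_dvd_iff_pow_eq_one.mp ?_
    have h1 : orderOf e ∣ (Fintype.card S).factorial := by
      simpa [Fintype.card_perm] using orderOf_dvd_card (x := e)
    exact h1.trans (Nat.factorial_dvd_factorial hcard)
  have hiter : ∀ (j : ℕ) (x : S), ((e ^ j) x : K) = (x : K) ^ q ^ j := by
    intro j
    induction j with
    | zero => intro x; simp
    | succ j ih =>
      intro x
      rw [pow_succ, Equiv.Perm.mul_apply, ih (e x)]
      have hex : ((e x : S) : K) = (x : K) ^ q := rfl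
      rw [hex, ← pow_mul]
      congr 1
      rw [pow_succ]
      ring
  have hfix : ∀ x ∈ S, x ^ q ^ m.factorial = x := by
    intro x hx
    have := hiter m.factorial ⟨x, hx⟩
    rw [horder] at this
    simpa using this.symm
  have hzero : ∀ x ∈ S, x ≠ 0 := by
    intro x hx hx0
    rw [hx0] at hx
    exact (spectrum.zero_mem_iff K).mp hx g.isUnit
  have hone : ∀ x ∈ S, x ^ N = 1 := by
    intro x hx
    have hN1 : N + 1 = q ^ m.factorial := by omega
    have h1 : x ^ N * x = x := by
      rw [← pow_succ, hN1]; exact hfix x hx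
    have := hzero x hx
    calc x ^ N = x ^ N * x * x⁻¹ := by field_simp
      _ = x * x⁻¹ := by rw [h1]
      _ = 1 := by field_simp
  -- the matrix B = A ^ N
  have hBmonic : (A ^ N).charpoly.Monic := (A ^ N).charpoly_monic
  have hBdeg : (A ^ N).charpoly.natDegree = m := by
    simpa using (A ^ N).charpoly_natDegree_eq_dim
  have hsplit : Polynomial.Splits (A ^ N).charpoly :=
    IsAlgClosed.splits _
  have hBroot : ∀ μ ∈ (A ^ N).charpoly.roots, μ = 1 := by
    intro μ hμ
    have hμS : μ ∈ spectrum K (A ^ N) :=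
      (mem_spectrum_iff_isRoot_aux _ μ).mpr (Polynomial.isRoot_of_mem_roots hμ)
    rw [spectrum.map_pow_of_pos A hNpos] at hμS
    obtain ⟨x, hx, rfl⟩ := hμS
    exact hone x hx
  have hroots_card : Multiset.card (A ^ N).charpoly.roots = m := by
    have h1 := (Polynomial.splits_iff_card_roots).mp hsplit
    rw [hBdeg] at h1
    exact h1
  have hroots : (A ^ N).charpoly.roots = Multiset.replicate m 1 :=
    Multiset.eq_replicate.mpr ⟨hroots_card, hBroot⟩
  have hchar : (A ^ N).charpoly = (Polynomial.X - 1) ^ m := by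
    rw [hsplit.eq_prod_roots_of_monic hBmonic, hroots,
      Multiset.map_replicate, Multiset.prod_replicate, Polynomial.C_1]
  refine ⟨hchar, ?_⟩
  have hca := (A ^ N).aeval_self_charpoly
  rw [hchar] at hca
  simpa using hca
end
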